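/- Let a ∈ ℂⁿ, β > 0, and let z ∈ ℂⁿ with ‖z‖₂ = 1 be a local minimizer of f(z) = (1/2)|a* z|² + (β/2) Σₖ |zₖ|⁴ on the complex unit sphere, with Lagrange multiplier λ = (1/2)|a* z|² + β Σₖ |zₖ|⁴. Then for every index k with a_k = 0, we have |z_k|² = λ/β. -/

import Mathlib

set_option maxHeartbeats 1000000

open Matrix Finset

private lemma stmt6_aux1 (A S4 β t : ℝ) (hA : 0 ≤ A) (hβ : 0 < β) (hS4 : 0 < S4)
    (ht : 0 < t) (hkey : t ^ 2 * (1 + S4) ≤ S4)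
    (hle : 1 / 2 * A + β / 2 * S4 ≤
      1 / 2 * A * (1 - t ^ 2) + β / 2 * (t ^ 4 + (1 - t ^ 2) ^ 2 * S4)) : False := by
  nlinarith [mul_le_mul_of_nonneg_left hkey
      (mul_nonneg (le_of_lt (half_pos hβ)) (sq_nonneg t)),
    mul_nonneg hA (sq_nonneg t),
    mul_pos (mul_pos hβ hS4) (mul_pos ht ht)]

private lemma stmt6_aux3 (A S4 β t0 m : ℝ) (hm : m ≠ 0) (ht0 : t0 ≠ 0)
    (hD0 : 1 / 2 * A * (-(2 * t0) / m) +
      β / 2 * (4 * t0 ^ 3 + 2 * (m / m) ^ 1 * (-(2 * t0) / m) * S4) = 0) :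
    β * t0 ^ 2 * m = 1 / 2 * A + β * S4 := by
  rw [div_self hm] at hD0
  field_simp at hD0
  have h8 : (8 * m * t0) ≠ 0 := by simp [hm, ht0]
  have h5 : (8 * m * t0) * (β * t0 ^ 2 * m) = (8 * m * t0) * (1 / 2 * A + β * S4) := by
    linear_combination (2 * m) * hD0
  exact mul_left_cancel₀ h8 h5

private lemma stmt6_aux2 (c t : ℝ) (hc : 0 ≤ c) (ht : t ≤ Real.sqrt c) (ht0 : 0 ≤ t) :
    t ^ 2 ≤ c := by
  nlinarith [Real.sq_sqrt hc, Real.sqrt_nonneg c]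


theorem stmt6 {n : ℕ} (a : Fin n → ℂ) (β : ℝ) (hβ : 0 < β)
    (z : Fin n → ℂ) (hz : ∑ k, ‖z k‖ ^ 2 = 1)
    (hmin : IsLocalMinOn
      (fun w : Fin n → ℂ => (1 / 2) * ‖star a ⬝ᵥ w‖ ^ 2 + (β / 2) * ∑ k, ‖w k‖ ^ 4)
      {w | ∑ k, ‖w k‖ ^ 2 = 1} z)
    (lam : ℝ)
    (hlam : lam = (1 / 2) * ‖star a ⬝ᵥ z‖ ^ 2 + β * ∑ k, ‖z k‖ ^ 4) :
    ∀ k, a k = 0 → ‖z k‖ ^ 2 = lam / β := by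
  intro k hak
  set f : (Fin n → ℂ) → ℝ :=
    fun w => (1 / 2) * ‖star a ⬝ᵥ w‖ ^ 2 + (β / 2) * ∑ k, ‖w k‖ ^ 4 with hf
  have hzk_le : ‖z k‖ ^ 2 ≤ 1 := by
    rw [← hz]
    exact Finset.single_le_sum (f := fun j => ‖z j‖ ^ 2) (fun j _ => sq_nonneg _) (mem_univ k)
  have hsplit2 : ‖z k‖ ^ 2 + ∑ j ∈ univ.erase k, ‖z j‖ ^ 2 = 1 := by
    rw [← hz]; exact Finset.add_sum_erase _ (fun j => ‖z j‖ ^ 2) (mem_univ k)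
  set S4 : ℝ := ∑ j ∈ univ.erase k, ‖z j‖ ^ 4 with hS4
  have hS4nn : 0 ≤ S4 := Finset.sum_nonneg fun j _ => by positivity
  have hsplit4 : ∑ j, ‖z j‖ ^ 4 = ‖z k‖ ^ 4 + S4 :=
    (Finset.add_sum_erase _ (fun j => ‖z j‖ ^ 4) (mem_univ k)).symm
  have hA : 0 ≤ ‖star a ⬝ᵥ z‖ ^ 2 := by positivity
  by_cases hr1 : ‖z k‖ ^ 2 = 1
  · -- all mass on coordinate k
    have hrest : ∑ j ∈ univ.erase k, ‖z j‖ ^ 2 = 0 := by linarith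
    have hz0 : ∀ j ∈ univ.erase k, z j = 0 := by
      intro j hj
      have := (Finset.sum_eq_zero_iff_of_nonneg (fun j _ => sq_nonneg ‖z j‖)).mp hrest j hj
      have : ‖z j‖ = 0 := by nlinarith [norm_nonneg (z j)]
      simpa using this
    have hdot : star a ⬝ᵥ z = 0 := by
      simp only [dotProduct, Pi.star_apply]
      apply Finset.sum_eq_zero
      intro j _
      by_cases hj : j = k
      · subst hj; simp [hak]
      · simp [hz0 j (Finset.mem_erase.mpr ⟨hj, mem_univ j⟩)]
    have hS40 : S4 = 0 := by
      rw [hS4]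
      exact Finset.sum_eq_zero fun j hj => by simp [hz0 j hj]
    have h4 : ∑ j, ‖z j‖ ^ 4 = 1 := by
      rw [hsplit4, hS40]
      nlinarith [hr1]
    rw [hr1, hlam, hdot, h4]
    simp
    field_simp
  · -- ‖z k‖² < 1
    have hrlt : ‖z k‖ ^ 2 < 1 := lt_of_le_of_ne hzk_le hr1
    set t0 : ℝ := ‖z k‖ with ht0def
    set m : ℝ := 1 - ‖z k‖ ^ 2 with hmdef
    have hm : 0 < m := by rw [hmdef]; linarith
    have ht0nn : 0 ≤ t0 := norm_nonneg _
    have ht01 : t0 < 1 := by nlinarith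
    have hmne : m ≠ 0 := ne_of_gt hm
    -- unit phase
    set u : ℂ := if z k = 0 then 1 else z k / (‖z k‖ : ℂ) with hu_def
    have hu : ‖u‖ = 1 := by
      rw [hu_def]
      split_ifs with h
      · simp
      · rw [norm_div, Complex.norm_real, Real.norm_eq_abs, abs_of_nonneg (norm_nonneg _)]
        exact div_self (norm_ne_zero_iff.mpr h)
    have huz : u * (t0 : ℂ) = z k := by
      rw [hu_def, ht0def]
      split_ifs with h
      · simp [h]
      · have hC : ((‖z k‖ : ℝ) : ℂ) ≠ 0 := by
          simpa using norm_ne_zero_iff.mpr h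
        rw [div_mul_eq_mul_div, mul_div_assoc, div_self hC, mul_one]
    -- the curve
    set w : ℝ → Fin n → ℂ := fun t j =>
      if j = k then u * (t : ℂ) else z j * ((Real.sqrt ((1 - t ^ 2) / m) : ℝ) : ℂ) with hw_def
    have hwt0 : w t0 = z := by
      funext j
      rw [hw_def]
      by_cases hj : j = k
      · simp only [hj, if_pos rfl]; exact huz
      · simp only [if_neg hj]
        have he : (1 : ℝ) - t0 ^ 2 = m := by rw [ht0def, hmdef]
        rw [he, div_self hmne, Real.sqrt_one]; simp
    have hq_nn : ∀ t : ℝ, |t| ≤ 1 → 0 ≤ (1 - t ^ 2) / m := by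
      intro t ht
      have h1 : (0:ℝ) ≤ 1 - t ^ 2 := by
        have := abs_le.mp ht; nlinarith
      exact div_nonneg h1 (le_of_lt hm)
    have hsq : ∀ t : ℝ, |t| ≤ 1 → Real.sqrt ((1 - t ^ 2) / m) ^ 2 = (1 - t ^ 2) / m :=
      fun t ht => Real.sq_sqrt (hq_nn t ht)
    have hnormk : ∀ t : ℝ, ‖u * (t : ℂ)‖ ^ 2 = t ^ 2 := by
      intro t
      rw [norm_mul, hu, one_mul, Complex.norm_real, Real.norm_eq_abs, sq_abs]
    have hnormj : ∀ (t : ℝ), |t| ≤ 1 → ∀ j,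
        ‖z j * ((Real.sqrt ((1 - t ^ 2) / m) : ℝ) : ℂ)‖ ^ 2 = ‖z j‖ ^ 2 * ((1 - t ^ 2) / m) := by
      intro t ht j
      rw [norm_mul, Complex.norm_real, Real.norm_eq_abs,
        abs_of_nonneg (Real.sqrt_nonneg _), mul_pow, hsq t ht]
    have hwS : ∀ t : ℝ, |t| ≤ 1 → ∑ j, ‖w t j‖ ^ 2 = 1 := by
      intro t ht
      rw [← Finset.add_sum_erase _ (fun j => ‖w t j‖ ^ 2) (mem_univ k)]
      have h1 : ‖w t k‖ ^ 2 = t ^ 2 := by rw [hw_def]; simp only [if_pos rfl]; exact hnormk t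
      have h2 : ∑ j ∈ univ.erase k, ‖w t j‖ ^ 2 = ((1 - t ^ 2) / m) * ∑ j ∈ univ.erase k, ‖z j‖ ^ 2 := by
        rw [Finset.mul_sum]
        apply Finset.sum_congr rfl
        intro j hj
        rw [hw_def]
        simp only [if_neg (Finset.mem_erase.mp hj).1]
        rw [hnormj t ht j]; ring
      have h3 : ∑ j ∈ univ.erase k, ‖z j‖ ^ 2 = m := by rw [hmdef]; linarith
      rw [h1, h2, h3]
      field_simp
      ring
    -- the objective along the curve
    set A : ℝ := ‖star a ⬝ᵥ z‖ ^ 2 with hAdef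
    set F : ℝ → ℝ := fun t =>
      (1 / 2) * A * ((1 - t ^ 2) / m) + (β / 2) * (t ^ 4 + ((1 - t ^ 2) / m) ^ 2 * S4) with hFdef
    have hfw : ∀ t : ℝ, |t| ≤ 1 → f (w t) = F t := by
      intro t ht
      have hdot : star a ⬝ᵥ w t = ((Real.sqrt ((1 - t ^ 2) / m) : ℝ) : ℂ) * (star a ⬝ᵥ z) := by
        simp only [dotProduct, Pi.star_apply, Finset.mul_sum]
        apply Finset.sum_congr rfl
        intro j _
        by_cases hj : j = k
        · subst hj; simp [hak]
        · rw [hw_def]; simp only [if_neg hj]; ring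
      have hdn : ‖star a ⬝ᵥ w t‖ ^ 2 = ((1 - t ^ 2) / m) * A := by
        rw [hdot, norm_mul, Complex.norm_real, Real.norm_eq_abs,
          abs_of_nonneg (Real.sqrt_nonneg _), mul_pow, hsq t ht, hAdef]
      have h4 : ∑ j, ‖w t j‖ ^ 4 = t ^ 4 + ((1 - t ^ 2) / m) ^ 2 * S4 := by
        rw [← Finset.add_sum_erase _ (fun j => ‖w t j‖ ^ 4) (mem_univ k)]
        have h1 : ‖w t k‖ ^ 4 = t ^ 4 := by
          have e : ‖w t k‖ ^ 2 = t ^ 2 := by rw [hw_def]; simp only [if_pos rfl]; exact hnormk t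
          have e2 : ‖w t k‖ ^ 4 = (‖w t k‖ ^ 2) ^ 2 := by ring
          rw [e2, e]; ring
        have h2 : ∑ j ∈ univ.erase k, ‖w t j‖ ^ 4 = ((1 - t ^ 2) / m) ^ 2 * S4 := by
          rw [hS4, Finset.mul_sum]
          apply Finset.sum_congr rfl
          intro j hj
          rw [hw_def]
          simp only [if_neg (Finset.mem_erase.mp hj).1]
          have e := hnormj t ht j
          have e2 : ‖z j * ((Real.sqrt ((1 - t ^ 2) / m) : ℝ) : ℂ)‖ ^ 4
              = (‖z j * ((Real.sqrt ((1 - t ^ 2) / m) : ℝ) : ℂ)‖ ^ 2) ^ 2 := by ring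
          rw [e2, e]; ring
        rw [h1, h2]
      simp only [hf, hFdef]
      rw [hdn, h4]
      ring
    -- continuity of the curve
    have hwcont : Continuous w := by
      apply continuous_pi
      intro j
      by_cases hj : j = k
      · simp only [hw_def, hj, if_pos rfl]
        exact continuous_const.mul (Complex.continuous_ofReal)
      · simp only [hw_def, if_neg hj]
        exact continuous_const.mul (Complex.continuous_ofReal.comp
          (Real.continuous_sqrt.comp (by fun_prop)))
    -- pull back the local min
    have hFmin : ∀ᶠ t in nhds t0, F t0 ≤ F t := by
      have hev : ∀ᶠ x in nhds z, x ∈ {w : Fin n → ℂ | ∑ j, ‖w j‖ ^ 2 = 1} → f z ≤ f x := by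
        have := hmin
        rw [IsLocalMinOn, IsMinFilter] at this
        exact eventually_nhdsWithin_iff.mp this
      have htd : Filter.Tendsto w (nhds t0) (nhds z) := by
        have := hwcont.continuousAt (x := t0)
        rwa [ContinuousAt, hwt0] at this
      have hev2 : ∀ᶠ t in nhds t0, (w t ∈ {w : Fin n → ℂ | ∑ j, ‖w j‖ ^ 2 = 1} → f z ≤ f (w t)) :=
        htd.eventually hev
      have hIoo : ∀ᶠ t in nhds t0, |t| < 1 := by
        have hmem : Set.Ioo (-1 : ℝ) 1 ∈ nhds t0 := Ioo_mem_nhds (by linarith) ht01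
        filter_upwards [hmem] with t ht
        exact abs_lt.mpr ⟨ht.1, ht.2⟩
      filter_upwards [hev2, hIoo] with t h1 h2
      have hle : |t| ≤ 1 := le_of_lt h2
      have hmemS : w t ∈ {w : Fin n → ℂ | ∑ j, ‖w j‖ ^ 2 = 1} := hwS t hle
      have := h1 hmemS
      rw [← hwt0, hfw t0 (by rw [abs_of_nonneg ht0nn]; linarith), hfw t hle] at this
      exact this
    by_cases hk0 : z k = 0
    · -- z k = 0 : contradiction with local minimality
      exfalso
      have ht00 : t0 = 0 := by rw [ht0def, hk0]; simp
      have hm1 : m = 1 := by rw [hmdef, hk0]; simp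
      have hzk0 : ‖z k‖ ^ 2 = 0 := by rw [hk0]; simp
      have hsum2 : ∑ j ∈ univ.erase k, ‖z j‖ ^ 2 = 1 := by
        have h2 := hsplit2
        rw [ht00] at h2
        linarith
      have hS4pos : 0 < S4 := by
        rcases (Finset.exists_ne_zero_of_sum_ne_zero (by rw [hsum2]; norm_num)) with ⟨j, hj, hjne⟩
        have hzj : 0 < ‖z j‖ := by
          rcases lt_or_eq_of_le (norm_nonneg (z j)) with h | h
          · exact h
          · exfalso; apply hjne; rw [← h]; ring
        have : 0 < ‖z j‖ ^ 4 := by positivity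
        calc (0:ℝ) < ‖z j‖ ^ 4 := this
          _ ≤ S4 := Finset.single_le_sum (f := fun j => ‖z j‖ ^ 4)
              (fun i _ => by positivity) hj
      rw [ht00] at hFmin
      rw [Metric.eventually_nhds_iff] at hFmin
      obtain ⟨ε, hε, hball⟩ := hFmin
      set t : ℝ := min (ε / 2) (min (1 / 2) (Real.sqrt (S4 / (1 + S4)))) with htdef
      have hsqpos : 0 < Real.sqrt (S4 / (1 + S4)) := Real.sqrt_pos.mpr (div_pos hS4pos (by linarith))
      have htpos : 0 < t := lt_min (by linarith) (lt_min (by norm_num) hsqpos)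
      have ht_half : t ≤ 1 / 2 := le_trans (min_le_right _ _) (min_le_left _ _)
      have ht1 : |t| ≤ 1 := by rw [abs_of_pos htpos]; linarith
      have htsq : t ^ 2 ≤ S4 / (1 + S4) :=
        stmt6_aux2 _ _ (le_of_lt (div_pos hS4pos (by linarith)))
          (le_trans (min_le_right _ _) (min_le_right _ _)) (le_of_lt htpos)
      have hkey : t ^ 2 * (1 + S4) ≤ S4 := by
        rw [← le_div_iff₀ (by linarith : (0:ℝ) < 1 + S4)]
        exact htsq
      have hdist : dist t 0 < ε := by
        rw [Real.dist_eq, sub_zero, abs_of_pos htpos]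
        have : t ≤ ε / 2 := min_le_left _ _
        linarith
      have hFle : F 0 ≤ F t := hball hdist
      have e0 : F 0 = 1 / 2 * A + β / 2 * S4 := by
        simp only [hFdef]; rw [hm1]; norm_num
      have e1 : F t = 1 / 2 * A * (1 - t ^ 2) + β / 2 * (t ^ 4 + (1 - t ^ 2) ^ 2 * S4) := by
        simp only [hFdef]; rw [hm1]; ring
      rw [e0, e1] at hFle
      exact stmt6_aux1 A S4 β t hA hβ hS4pos htpos hkey hFle
    · -- z k ≠ 0 : first-order condition
      have ht0pos : 0 < t0 := by rw [ht0def]; exact norm_pos_iff.mpr hk0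
      have hloc : IsLocalMin F t0 := hFmin
      have h1 : HasDerivAt (fun s : ℝ => 1 - s ^ 2) (-(2 * t0)) t0 := by
        simpa using (hasDerivAt_pow 2 t0).const_sub 1
      have h2 : HasDerivAt (fun s : ℝ => (1 - s ^ 2) / m) (-(2 * t0) / m) t0 := h1.div_const m
      have h3 := h2.pow 2
      have h4 := hasDerivAt_pow 4 t0
      have hFd : HasDerivAt F ((1 / 2 * A) * (-(2 * t0) / m)
          + (β / 2) * ((4 : ℕ) * t0 ^ (4 - 1)
            + ((2 : ℕ) * ((1 - t0 ^ 2) / m) ^ (2 - 1) * (-(2 * t0) / m)) * S4)) t0 := by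
        rw [hFdef]
        exact (h2.const_mul (1 / 2 * A)).add ((h4.add (h3.mul_const S4)).const_mul (β / 2))
      have hD0 := hloc.deriv_eq_zero
      rw [hFd.deriv] at hD0
      have hm2 : (1 : ℝ) - t0 ^ 2 = m := by rw [ht0def, hmdef]
      rw [hm2] at hD0
      have ht0ne : t0 ≠ 0 := ne_of_gt ht0pos
      push_cast at hD0
      have key : β * t0 ^ 2 * m = 1 / 2 * A + β * S4 :=
        stmt6_aux3 A S4 β t0 m hmne ht0ne hD0
      rw [hlam, hsplit4, eq_div_iff (ne_of_gt hβ)]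
      rw [← hm2] at key
      have hgoal : ‖z k‖ ^ 2 = t0 ^ 2 := by rw [ht0def]
      rw [hgoal]
      linear_combination key
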